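/- arXiv:2601.21707 — 4 statements merged into one kernel-verified Lean document; each statement's English description precedes it below -/
import Mathlib

section
/- Let H₂ be a complex Hilbert space, H₁ ⊆ H₂ a closed (complete) subspace, X a nonempty set, and ξ₂ : X → H₂ a family of vectors. Define ξ₁(x) to be the orthogonal projection of ξ₂(x) onto H₁ for each x ∈ X (so that for f ∈ H₁ one has ⟨f, ξ₁(x)⟩ = ⟨f, ξ₂(x)⟩, i.e., ξ₁ is the family of kernel slices of H₁). For a subset X' ⊆ X let G_m := closure of span{ξ_m(x) : x ∈ X'} for m = 1,2. Then for every F ∈ H₁ and every X' ⊆ X, the distance from F to G₁ is at most the distance from F to G₂: inf_{g ∈ G₁} ‖F − g‖ ≤ inf_{g ∈ G₂} ‖F − g‖. -/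
open scoped ComplexInnerProductSpace

/-- **Optimal kernel in nested RKHSs.** Let `K` be a closed subspace of the complex
Hilbert space `H` (playing the role of `H₁ ⊆ H₂`), `ξ₂ : X → H` a family of kernel
slices of `H₂`, and `ξ₁ x := orthogonalProjection K (ξ₂ x)` the corresponding kernel
slices of `H₁`. For any `X' ⊆ X`, let `G_m` be the closure of the span of
`{ξ_m x : x ∈ X'}`. Then every `F ∈ K` is at least as close to `G₁` as to `G₂`. -/
theorem optimal_kernel_in_nested_RKHS
    {H : Type*} [NormedAddCommGroup H] [InnerProductSpace ℂ H] [CompleteSpace H]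
    {X : Type*} [Nonempty X]
    (K : Submodule ℂ H) (hK : IsClosed (K : Set H)) (ξ₂ : X → H)
    (F : H) (hF : F ∈ K) (X' : Set X) :
    haveI : CompleteSpace K := hK.completeSpace_coe
    Metric.infDist F
        (closure (Submodule.span ℂ
          ((fun x => ((Submodule.orthogonalProjectionOnto K (ξ₂ x) : K) : H)) '' X') : Set H))
      ≤ Metric.infDist F (closure (Submodule.span ℂ (ξ₂ '' X') : Set H)) := by
  haveI : CompleteSpace K := hK.completeSpace_coe
  set P : H →L[ℂ] H := K.subtypeL.comp (Submodule.orthogonalProjectionOnto K) with hP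
  have hPnorm : ∀ v : H, ‖P v‖ ≤ ‖v‖ := by
    intro v
    have := (Submodule.orthogonalProjectionOnto K).le_of_opNorm_le (Submodule.orthogonalProjectionOnto_norm_le K) v
    simpa [hP] using this
  have hPF : P F = F := by
    rw [hP]; exact K.starProjection_eq_self_iff.mpr hF
  set S₁ : Set H := (Submodule.span ℂ
      ((fun x => ((Submodule.orthogonalProjectionOnto K (ξ₂ x) : K) : H)) '' X') : Set H)
  set S₂ : Set H := (Submodule.span ℂ (ξ₂ '' X') : Set H)
  have hne : (closure S₂).Nonempty := ⟨0, subset_closure (Submodule.zero_mem _)⟩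
  haveI : Nonempty (closure S₂) := hne.to_subtype
  rw [Metric.infDist_eq_iInf (s := closure S₂)]
  apply le_ciInf
  rintro ⟨g, hg⟩
  have hPg : P g ∈ closure S₁ := by
    have hmap : (Submodule.span ℂ (ξ₂ '' X')).map (P : H →ₗ[ℂ] H) ≤
        Submodule.span ℂ ((fun x => ((Submodule.orthogonalProjectionOnto K (ξ₂ x) : K) : H)) '' X') := by
      rw [Submodule.map_span]
      apply Submodule.span_mono
      rintro _ ⟨_, ⟨x, hx, rfl⟩, rfl⟩
      exact ⟨x, hx, rfl⟩
    have := (P.continuous.continuousOn.image_closure (s := S₂)) ⟨g, hg, rfl⟩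
    refine closure_mono ?_ this
    rintro _ ⟨v, hv, rfl⟩
    exact hmap ⟨v, hv, rfl⟩
  calc Metric.infDist F (closure S₁) ≤ dist F (P g) := Metric.infDist_le_dist_of_mem hPg
    _ = ‖P (F - g)‖ := by rw [dist_eq_norm]; nth_rewrite 1 [← hPF]; rw [← map_sub]
    _ ≤ ‖F - g‖ := hPnorm _
    _ = dist F g := (dist_eq_norm F g).symm
end

section
/- Let a, z ∈ ℂ with |a| < 1 and |z| < 1, let D ∈ ℕ, and let L_j^a(z) := (sqrt(1 − |a|²)/(1 − conj(a)·z)) · B^a(z)^j denote the discrete Laguerre functions, where B^a(z) := (z − a)/(1 − conj(a)·z). Then the tail series converges and Σ_{j=D}^{∞} |L_j^a(z)|² = |B^a(z)|^{2D} / (1 − |z|²). -/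
/-- The Blaschke factor with parameter `a` in the open unit disk. -/
noncomputable def blaschke (a z : ℂ) : ℂ := (z - a) / (1 - starRingEnd ℂ a * z)

/-- The `j`-th discrete Laguerre function with parameter `a`. -/
noncomputable def laguerre (a : ℂ) (j : ℕ) (z : ℂ) : ℂ :=
  ((Real.sqrt (1 - ‖a‖ ^ 2) : ℂ) / (1 - starRingEnd ℂ a * z)) * blaschke a z ^ j

/-- **Tail sum of squared discrete Laguerre functions.** For `|a| < 1`, `|z| < 1`
and `D ∈ ℕ`, the series `∑_{j ≥ D} |L_j^a(z)|²` converges and equals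
`|B^a(z)|^{2D} / (1 − |z|²)`. -/
theorem laguerre_tail_sum (a z : ℂ) (ha : ‖a‖ < 1) (hz : ‖z‖ < 1)
    (D : ℕ) :
    Summable (fun j : {j : ℕ // D ≤ j} => ‖laguerre a j.1 z‖ ^ 2) ∧
    ∑' j : {j : ℕ // D ≤ j}, ‖laguerre a j.1 z‖ ^ 2
      = ‖blaschke a z‖ ^ (2 * D) / (1 - ‖z‖ ^ 2) := by
  set d : ℂ := 1 - starRingEnd ℂ a * z with hd_def
  have hs : (0:ℝ) < 1 - ‖a‖ ^ 2 := by nlinarith [norm_nonneg a]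
  have ht : (0:ℝ) < 1 - ‖z‖ ^ 2 := by nlinarith [norm_nonneg z]
  have hd : d ≠ 0 := by
    intro h
    have : starRingEnd ℂ a * z = 1 := by
      have := sub_eq_zero.mp h; exact this.symm
    have h1 : ‖starRingEnd ℂ a * z‖ = 1 := by rw [this]; simp
    rw [norm_mul, Complex.norm_conj] at h1
    nlinarith [norm_nonneg a, norm_nonneg z]
  have hdn : (0:ℝ) < Complex.normSq d := by
    rwa [Complex.normSq_pos]
  -- key algebraic identity
  have key : Complex.normSq d - Complex.normSq (z - a)
      = (1 - Complex.normSq a) * (1 - Complex.normSq z) := by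
    simp only [hd_def, Complex.normSq_apply, Complex.sub_re, Complex.sub_im, Complex.one_re,
      Complex.one_im, Complex.mul_re, Complex.mul_im, Complex.conj_re, Complex.conj_im]
    ring
  have hna : Complex.normSq a = ‖a‖ ^ 2 := (Complex.sq_norm a).symm
  have hnz : Complex.normSq z = ‖z‖ ^ 2 := (Complex.sq_norm z).symm
  set r : ℝ := ‖blaschke a z‖ ^ 2 with hr_def
  have hr_eq : r = Complex.normSq (z - a) / Complex.normSq d := by
    rw [hr_def, blaschke, norm_div, div_pow, Complex.sq_norm, Complex.sq_norm]
  have hr0 : 0 ≤ r := sq_nonneg _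
  have h1r : 1 - r = (1 - ‖a‖ ^ 2) * (1 - ‖z‖ ^ 2) / Complex.normSq d := by
    rw [hr_eq, ← hna, ← hnz, ← key]
    field_simp
  have hr1 : r < 1 := by
    have : 0 < 1 - r := by
      rw [h1r]
      positivity
    linarith
  set c : ℝ := (1 - ‖a‖ ^ 2) / Complex.normSq d with hc_def
  have habs : ∀ j : ℕ, ‖laguerre a j z‖ ^ 2 = c * r ^ j := by
    intro j
    rw [laguerre, norm_mul, norm_div, norm_pow, mul_pow, div_pow, ← pow_mul,
      mul_comm j 2, pow_mul, ← hr_def]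
    rw [hc_def, ← Complex.sq_norm d, Complex.norm_real, Real.norm_eq_abs,
      abs_of_nonneg (Real.sqrt_nonneg _), Real.sq_sqrt hs.le]
  have hsum : Summable (fun j : ℕ => ‖laguerre a j z‖ ^ 2) := by
    simp only [habs]
    exact (summable_geometric_of_lt_one hr0 hr1).mul_left c
  have hsum' : Summable (fun j : {j : ℕ // D ≤ j} => ‖laguerre a j.1 z‖ ^ 2) :=
    hsum.comp_injective Subtype.val_injective
  refine ⟨hsum', ?_⟩
  let e : ℕ ≃ {j : ℕ // D ≤ j} :=
    { toFun := fun n => ⟨D + n, Nat.le_add_right _ _⟩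
      invFun := fun j => j.1 - D
      left_inv := fun n => by simp
      right_inv := fun j => by
        ext; simp [Nat.add_sub_cancel' j.2] }
  rw [← e.tsum_eq]
  have : ∀ n : ℕ, ‖laguerre a ((e n).1) z‖ ^ 2 = (c * r ^ D) * r ^ n := by
    intro n
    show ‖laguerre a (D + n) z‖ ^ 2 = c * r ^ D * r ^ n
    rw [habs, pow_add]; ring
  rw [tsum_congr this, tsum_mul_left, tsum_geometric_of_lt_one hr0 hr1]
  rw [pow_mul, ← hr_def, h1r, hc_def]
  field_simp
end

section
/- Let a ∈ ℂ with |a| < 1, let 0 < ρ < 1, let D ∈ ℕ, and let z, t ∈ ℂ with |z| ≤ ρ and |t| ≤ ρ. With L_j^a(z) := (sqrt(1 − |a|²)/(1 − conj(a)·z)) · B^a(z)^j and B^a(z) := (z − a)/(1 − conj(a)·z), the truncated Laguerre kernel ξ_D^a(z,t) := Σ_{j=0}^{D−1} L_j^a(z) · conj(L_j^a(t)) approximates the Cauchy kernel ξ(z,t) := 1/(1 − conj(t)·z) with the uniform error bound | ξ(z,t) − ξ_D^a(z,t) | ≤ ( (|a| + ρ)/(1 + |a|·ρ) )^{2D} /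 (1 − ρ²). -/
open Complex

lemma key_identity (a z t : ℂ) (ha : ‖a‖ < 1)
    (h1 : (1 : ℂ) - starRingEnd ℂ a * z ≠ 0)
    (h2 : (1 : ℂ) - a * starRingEnd ℂ t ≠ 0)
    (h3 : (1 : ℂ) - starRingEnd ℂ t * z ≠ 0) (D : ℕ) :
    1 / (1 - starRingEnd ℂ t * z)
      - ∑ j ∈ Finset.range D, ((((Real.sqrt (1 - ‖a‖ ^ 2) : ℂ) / (1 - starRingEnd ℂ a * z)) * ((z - a) / (1 - starRingEnd ℂ a * z)) ^ j) * starRingEnd ℂ (((Real.sqrt (1 - ‖a‖ ^ 2) : ℂ) / (1 - starRingEnd ℂ a * t)) * ((t - a) / (1 - starRingEnd ℂ a * t)) ^ j))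
      = (((z - a) / (1 - starRingEnd ℂ a * z)) * starRingEnd ℂ ((t - a) / (1 - starRingEnd ℂ a * t))) ^ D
          / (1 - starRingEnd ℂ t * z) := by
  have hc : ((Real.sqrt (1 - ‖a‖ ^ 2) : ℝ) : ℂ) ^ 2 = 1 - a * starRingEnd ℂ a := by
    rw [← Complex.ofReal_pow, Real.sq_sqrt (by nlinarith [norm_nonneg a]),
      Complex.mul_conj]
    simp [Complex.normSq_eq_norm_sq]
  set c := ((Real.sqrt (1 - ‖a‖ ^ 2) : ℝ) : ℂ) with hcdef
  have hcconj : starRingEnd ℂ c = c := Complex.conj_ofReal _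
  have hterm : ∀ j : ℕ,
      ((c / (1 - starRingEnd ℂ a * z)) * ((z - a) / (1 - starRingEnd ℂ a * z)) ^ j) * starRingEnd ℂ ((c / (1 - starRingEnd ℂ a * t)) * ((t - a) / (1 - starRingEnd ℂ a * t)) ^ j)
      = ((1 - a * starRingEnd ℂ a) / ((1 - starRingEnd ℂ a * z) * (1 - a * starRingEnd ℂ t))) * (((z - a) / (1 - starRingEnd ℂ a * z)) * starRingEnd ℂ ((t - a) / (1 - starRingEnd ℂ a * t))) ^ j := by
    intro j
    simp only [map_mul, map_div₀, map_pow, map_sub, map_one, hcconj, Complex.conj_conj]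
    rw [mul_pow, ← hc]
    field_simp
  have h2' : (1 : ℂ) - starRingEnd ℂ a * t ≠ 0 := by
    intro h
    apply h2
    have := congrArg (starRingEnd ℂ) h
    simpa using this
  have step : 1 / (1 - starRingEnd ℂ t * z) - (1 - a * starRingEnd ℂ a) / ((1 - starRingEnd ℂ a * z) * (1 - a * starRingEnd ℂ t))
      = (((z - a) / (1 - starRingEnd ℂ a * z)) * starRingEnd ℂ ((t - a) / (1 - starRingEnd ℂ a * t))) / (1 - starRingEnd ℂ t * z) := by
    simp only [map_div₀, map_sub, map_mul, map_one, Complex.conj_conj]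
    rw [div_mul_div_comm, div_sub_div _ _ h3 (mul_ne_zero h1 h2), div_div,
      div_eq_div_iff (mul_ne_zero h3 (mul_ne_zero h1 h2)) (mul_ne_zero (mul_ne_zero h1 h2) h3)]
    ring
  set W := ((z - a) / (1 - starRingEnd ℂ a * z)) * starRingEnd ℂ ((t - a) / (1 - starRingEnd ℂ a * t)) with hW
  set Z := (1 : ℂ) - starRingEnd ℂ t * z with hZ
  set C := (1 - a * starRingEnd ℂ a) / ((1 - starRingEnd ℂ a * z) * (1 - a * starRingEnd ℂ t)) with hC
  induction D with
  | zero => simp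
  | succ n ih =>
    rw [Finset.sum_range_succ, hterm n]
    calc 1 / Z - (∑ j ∈ Finset.range n, ((c / (1 - starRingEnd ℂ a * z)) * ((z - a) / (1 - starRingEnd ℂ a * z)) ^ j) * starRingEnd ℂ ((c / (1 - starRingEnd ℂ a * t)) * ((t - a) / (1 - starRingEnd ℂ a * t)) ^ j) + C * W ^ n)
        = W ^ n / Z - C * W ^ n := by rw [← ih]; ring
      _ = W ^ (n + 1) / Z := by
          have gen : ∀ (Zv Cv Wv : ℂ), 1 / Zv - Cv = Wv / Zv →
              Wv ^ n / Zv - Cv * Wv ^ n = Wv ^ (n + 1) / Zv := by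
            intro Zv Cv Wv h
            calc Wv ^ n / Zv - Cv * Wv ^ n = Wv ^ n * (1 / Zv - Cv) := by ring
              _ = Wv ^ n * (Wv / Zv) := by rw [h]
              _ = Wv ^ (n + 1) / Zv := by rw [pow_succ]; ring
          exact gen Z C W step

lemma blaschke_abs_le (a z : ℂ) (ρ : ℝ) (ha : ‖a‖ < 1) (hρ0 : 0 ≤ ρ)
    (hρ1 : ρ < 1) (hz : ‖z‖ ≤ ρ) :
    ‖(z - a) / (1 - starRingEnd ℂ a * z)‖
      ≤ (‖a‖ + ρ) / (1 + ‖a‖ * ρ) := by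
  set α := ‖a‖ with hα
  set r := ‖z‖ with hr
  have h0α : 0 ≤ α := norm_nonneg a
  have h0r : 0 ≤ r := norm_nonneg z
  set s := a.re * z.re + a.im * z.im with hs
  have e1 : ‖z - a‖ ^ 2 = r ^ 2 - 2 * s + α ^ 2 := by
    simp only [hα, hr, hs, Complex.sq_norm, Complex.normSq_apply, Complex.sub_re,
      Complex.sub_im]
    ring
  have e2 : ‖1 - starRingEnd ℂ a * z‖ ^ 2 = 1 - 2 * s + α ^ 2 * r ^ 2 := by
    simp only [hα, hr, hs, Complex.sq_norm, Complex.normSq_apply, Complex.sub_re,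
      Complex.sub_im, Complex.mul_re, Complex.mul_im, Complex.conj_re, Complex.conj_im,
      Complex.one_re, Complex.one_im]
    ring
  have habs : ‖starRingEnd ℂ a * z‖ = α * r := by
    rw [norm_mul, Complex.norm_conj]
  have hre : (starRingEnd ℂ a * z).re = s := by
    simp only [Complex.mul_re, Complex.conj_re, Complex.conj_im, hs]
    ring
  have hslb : -(α * r) ≤ s := by
    have h := Complex.abs_re_le_norm (starRingEnd ℂ a * z)
    rw [habs, hre] at h
    exact (abs_le.mp h).1
  have hαr : α * r < 1 := by nlinarith
  have hden : 1 - α * r ≤ ‖1 - starRingEnd ℂ a * z‖ := by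
    have h := norm_sub_norm_le (1 : ℂ) (starRingEnd ℂ a * z)
    simpa [habs] using h
  have hdpos : 0 < ‖1 - starRingEnd ℂ a * z‖ := by linarith
  rw [norm_div, div_le_div_iff₀ hdpos (by nlinarith)]
  have key : (‖z - a‖ * (1 + α * ρ)) ^ 2
      ≤ ((α + ρ) * ‖1 - starRingEnd ℂ a * z‖) ^ 2 := by
    rw [mul_pow, mul_pow, e1, e2]
    nlinarith [mul_nonneg (mul_nonneg (by linarith : (0:ℝ) ≤ s + α * r)
        (by nlinarith : (0:ℝ) ≤ 1 - α ^ 2)) (by nlinarith : (0:ℝ) ≤ 1 - ρ ^ 2),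
      mul_nonneg (mul_nonneg (by linarith : (0:ℝ) ≤ ρ - r)
        (by nlinarith : (0:ℝ) ≤ 1 - α ^ 2))
        (by nlinarith : (0:ℝ) ≤ (α + ρ) * (1 + α * r) + (1 + α * ρ) * (α + r))]
  exact le_of_pow_le_pow_left₀ two_ne_zero
    (by positivity) key

/-- **Uniform error bound for the truncated Laguerre kernel.** For `|a| < 1`,
`0 < ρ < 1` and `|z|, |t| ≤ ρ`, the truncated Laguerre kernel
`ξ_D^a(z,t) = ∑_{j<D} L_j^a(z) conj(L_j^a(t))` approximates the Cauchy kernel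
`ξ(z,t) = 1/(1 − conj t · z)` with error at most `((|a|+ρ)/(1+|a|ρ))^{2D}/(1−ρ²)`. -/
theorem laguerre_kernel_uniform_error_bound (a : ℂ) (ha : ‖a‖ < 1)
    (ρ : ℝ) (hρ : 0 < ρ) (hρ1 : ρ < 1) (D : ℕ) (z t : ℂ)
    (hz : ‖z‖ ≤ ρ) (ht : ‖t‖ ≤ ρ) :
    ‖1 / (1 - starRingEnd ℂ t * z)
        - ∑ j ∈ Finset.range D, laguerre a j z * starRingEnd ℂ (laguerre a j t)‖
      ≤ ((‖a‖ + ρ) / (1 + ‖a‖ * ρ)) ^ (2 * D) / (1 - ρ ^ 2) := by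
  have h0α : 0 ≤ ‖a‖ := norm_nonneg a
  have habs_unit : ∀ w : ℂ, ‖w‖ ≤ ρ → (1 : ℂ) - starRingEnd ℂ a * w ≠ 0 := by
    intro w hw h
    have h1 : ‖starRingEnd ℂ a * w‖ < 1 := by
      rw [norm_mul, Complex.norm_conj]
      nlinarith [norm_nonneg w]
    have : (1 : ℂ) = starRingEnd ℂ a * w := by linear_combination h
    rw [← this] at h1
    simp at h1
  have h1 : (1 : ℂ) - starRingEnd ℂ a * z ≠ 0 := habs_unit z hz
  have h1t : (1 : ℂ) - starRingEnd ℂ a * t ≠ 0 := habs_unit t ht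
  have h2 : (1 : ℂ) - a * starRingEnd ℂ t ≠ 0 := by
    intro h
    apply h1t
    have := congrArg (starRingEnd ℂ) h
    simpa [mul_comm] using this
  have h3 : (1 : ℂ) - starRingEnd ℂ t * z ≠ 0 := by
    intro h
    have h1' : ‖starRingEnd ℂ t * z‖ < 1 := by
      rw [norm_mul, Complex.norm_conj]
      nlinarith [norm_nonneg t, norm_nonneg z]
    have : (1 : ℂ) = starRingEnd ℂ t * z := by linear_combination h
    rw [← this] at h1'
    simp at h1'
  have hkey := key_identity a z t ha h1 h2 h3 D
  simp only [laguerre, blaschke]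
  rw [hkey, norm_div, norm_pow, norm_mul, Complex.norm_conj]
  set r0 := (‖a‖ + ρ) / (1 + ‖a‖ * ρ) with hr0
  have hr0nn : 0 ≤ r0 := by positivity
  have hbz := blaschke_abs_le a z ρ ha hρ.le hρ1 hz
  have hbt := blaschke_abs_le a t ρ ha hρ.le hρ1 ht
  have hnum : (‖(z - a) / (1 - starRingEnd ℂ a * z)‖
      * ‖(t - a) / (1 - starRingEnd ℂ a * t)‖) ^ D ≤ r0 ^ (2 * D) := by
    have hmul : ‖(z - a) / (1 - starRingEnd ℂ a * z)‖
        * ‖(t - a) / (1 - starRingEnd ℂ a * t)‖ ≤ r0 * r0 :=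
      mul_le_mul hbz hbt (norm_nonneg _) hr0nn
    calc (‖(z - a) / (1 - starRingEnd ℂ a * z)‖
        * ‖(t - a) / (1 - starRingEnd ℂ a * t)‖) ^ D ≤ (r0 * r0) ^ D :=
          pow_le_pow_left₀ (by positivity) hmul D
      _ = r0 ^ (2 * D) := by rw [two_mul, pow_add, mul_pow]
  have hden : 1 - ρ ^ 2 ≤ ‖1 - starRingEnd ℂ t * z‖ := by
    have h := norm_sub_norm_le (1 : ℂ) (starRingEnd ℂ t * z)
    have habs : ‖starRingEnd ℂ t * z‖ ≤ ρ ^ 2 := by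
      rw [norm_mul, Complex.norm_conj]
      nlinarith [norm_nonneg t, norm_nonneg z]
    simp only [norm_one] at h
    nlinarith
  exact div_le_div₀ (by positivity) hnum (by nlinarith) hden
end

section
/- Let a, z, t ∈ ℂ with |a| < 1, |z| < 1, and |t| < 1. With L_j^a(z) := (sqrt(1 − |a|²)/(1 − conj(a)·z)) · B^a(z)^j and B^a(z) := (z − a)/(1 − conj(a)·z), the series Σ_{j=0}^{∞} L_j^a(z) · conj(L_j^a(t)) converges and its sum equals the Cauchy kernel: Σ_{j=0}^{∞} L_j^a(z) · conj(L_j^a(t)) = 1/(1 − conj(t)·z). In particular, the sum is independent of the parameter a. -/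
lemma one_sub_conj_mul_ne_zero {a z : ℂ} (ha : ‖a‖ < 1) (hz : ‖z‖ < 1) :
    1 - starRingEnd ℂ a * z ≠ 0 := by
  intro h
  have h1 : (1 : ℂ) = starRingEnd ℂ a * z := by linear_combination h
  have h2 : ‖starRingEnd ℂ a * z‖ < 1 := by
    rw [norm_mul, Complex.norm_conj]
    nlinarith [norm_nonneg a, norm_nonneg z]
  rw [← h1] at h2
  simp at h2

lemma blaschke_abs_lt {a w : ℂ} (ha : ‖a‖ < 1) (hw : ‖w‖ < 1) :
    ‖blaschke a w‖ < 1 := by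
  have hne := one_sub_conj_mul_ne_zero ha hw
  have hpos : 0 < ‖1 - starRingEnd ℂ a * w‖ := by
    simpa [norm_pos_iff] using hne
  rw [blaschke, norm_div, div_lt_one hpos]
  have key : Complex.normSq (1 - starRingEnd ℂ a * w) - Complex.normSq (w - a)
      = (1 - Complex.normSq a) * (1 - Complex.normSq w) := by
    simp only [Complex.normSq_apply, Complex.sub_re, Complex.sub_im, Complex.mul_re,
      Complex.mul_im, Complex.conj_re, Complex.conj_im, Complex.one_re, Complex.one_im]
    ring
  have ha2 : Complex.normSq a < 1 := by
    rw [← Complex.sq_norm]; nlinarith [norm_nonneg a]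
  have hw2 : Complex.normSq w < 1 := by
    rw [← Complex.sq_norm]; nlinarith [norm_nonneg w]
  have hlt : Complex.normSq (w - a) < Complex.normSq (1 - starRingEnd ℂ a * w) := by nlinarith
  have := Real.sqrt_lt_sqrt (Complex.normSq_nonneg _) hlt
  simpa [Complex.norm_def] using this

/-- **Laguerre expansion of the Cauchy kernel.** For `|a| < 1`, `|z| < 1`, `|t| < 1`,
the series `∑_j L_j^a(z) conj(L_j^a(t))` converges to the Cauchy kernel
`1/(1 − conj t · z)`; in particular the sum does not depend on `a`. -/
theorem laguerre_expansion_cauchy_kernel (a z t : ℂ) (ha : ‖a‖ < 1)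
    (hz : ‖z‖ < 1) (ht : ‖t‖ < 1) :
    Summable (fun j : ℕ => laguerre a j z * starRingEnd ℂ (laguerre a j t)) ∧
    ∑' j : ℕ, laguerre a j z * starRingEnd ℂ (laguerre a j t)
      = 1 / (1 - starRingEnd ℂ t * z) := by
  set s : ℝ := 1 - ‖a‖ ^ 2 with hs_def
  have hs0 : 0 < s := by nlinarith [norm_nonneg a]
  have hsC : (s : ℂ) = 1 - a * starRingEnd ℂ a := by
    rw [hs_def, ← Complex.normSq_eq_norm_sq, Complex.ofReal_sub, Complex.ofReal_one,
      Complex.mul_conj]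
  have hsqrt : ((Real.sqrt s : ℝ) : ℂ) * ((Real.sqrt s : ℝ) : ℂ) = (s : ℂ) := by
    rw [← Complex.ofReal_mul, Real.mul_self_sqrt hs0.le]
  have hu : 1 - starRingEnd ℂ a * z ≠ 0 := one_sub_conj_mul_ne_zero ha hz
  have hv' : 1 - starRingEnd ℂ a * t ≠ 0 := one_sub_conj_mul_ne_zero ha ht
  have hv : 1 - a * starRingEnd ℂ t ≠ 0 := by
    intro h
    apply hv'
    have := congrArg (starRingEnd ℂ) h
    simpa using this
  have hzt : 1 - starRingEnd ℂ t * z ≠ 0 := one_sub_conj_mul_ne_zero ht hz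
  set q : ℂ := blaschke a z * starRingEnd ℂ (blaschke a t) with hq_def
  have hq : ‖q‖ < 1 := by
    have h1 := blaschke_abs_lt ha hz
    have h2 := blaschke_abs_lt ha ht
    have : ‖q‖ = ‖blaschke a z‖ * ‖blaschke a t‖ := by
      simp [hq_def]
    rw [this]
    nlinarith [norm_nonneg (blaschke a z), norm_nonneg (blaschke a t)]
  have hterm : ∀ j : ℕ, laguerre a j z * starRingEnd ℂ (laguerre a j t)
      = ((s : ℂ) / ((1 - starRingEnd ℂ a * z) * (1 - a * starRingEnd ℂ t))) * q ^ j := by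
    intro j
    have hc : starRingEnd ℂ (laguerre a j t)
        = ((Real.sqrt s : ℂ) / (1 - a * starRingEnd ℂ t)) * (starRingEnd ℂ (blaschke a t)) ^ j := by
      simp [laguerre, map_mul, map_div₀, map_pow, Complex.conj_ofReal, hs_def]
    rw [hc, laguerre, hq_def, mul_pow]
    field_simp
    linear_combination (blaschke a z ^ j * (starRingEnd ℂ (blaschke a t)) ^ j) * hsqrt
  have hgeom : Summable fun j : ℕ => q ^ j := summable_geometric_of_norm_lt_one hq
  have h1q : 1 - q ≠ 0 := by
    intro h
    have : q = 1 := by linear_combination -h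
    rw [this] at hq
    simp at hq
  have hkey : (1 : ℂ) - q
      = (s : ℂ) * (1 - starRingEnd ℂ t * z)
        / ((1 - starRingEnd ℂ a * z) * (1 - a * starRingEnd ℂ t)) := by
    rw [hq_def, blaschke, blaschke, map_div₀, map_sub, map_sub, map_one, map_mul,
      Complex.conj_conj, hsC]
    have hu2 : 1 - z * starRingEnd ℂ a ≠ 0 := by rw [mul_comm]; exact hu
    field_simp
    ring
  refine ⟨(hgeom.mul_left _).congr fun j => (hterm j).symm, ?_⟩
  rw [tsum_congr hterm, tsum_mul_left, tsum_geometric_of_norm_lt_one hq, hkey]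
  have hsne : (s : ℂ) ≠ 0 := by
    exact_mod_cast hs0.ne'
  field_simp
end
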